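/- arXiv:0803.0055 — 2 statements merged into one kernel-verified Lean document; each statement's English description precedes it below -/
import Mathlib

section
/- Let F be the global rule of a sand automaton. The following statements are equivalent: (1) F is equicontinuous on (C,d); (2) F is ultimately periodic, i.e. there exist n ≥ 0 and p > 0 with F^(n+p) = F^n; (3) every configuration x ∈ C is ultimately periodic for F, i.e. for every x ∈ C there exist n ≥ 0 and p > 0 with F^(n+p)(x) = F^n(x). -/
open Filter

/-- The set `Z̃ = ℤ ∪ {−∞, +∞}` of extended integers. -/
abbrev Ztilde := WithBot (WithTop ℤ)

/-- Embedding of `ℤ` into `Z̃`. -/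
def Ztilde.ofInt (z : ℤ) : Ztilde := ((z : WithTop ℤ) : WithBot (WithTop ℤ))

/-- The underlying integer of a finite extended integer (0 on `±∞`). -/
def Ztilde.toInt (n : Ztilde) : ℤ := (n.unbotD 0).untopD 0

/-- The sand-automata configuration space `C = Z̃^(ℤ^d)`. -/
abbrev Conf (d : ℕ) := (Fin d → ℤ) → Ztilde

/-- `ζ : C → {0,1}^(ℤ^(d+1))`, `ζ(x)_(i,k) = 1` iff `x_i ≥ k`. -/
noncomputable def zeta {d : ℕ} (x : Conf d) : (Fin d → ℤ) × ℤ → Bool :=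
  fun j => decide (Ztilde.ofInt j.2 ≤ x j.1)

/-- The subshift `S_K`: configurations with no `0` below a `1` in a column. -/
def SK (d : ℕ) : Set ((Fin d → ℤ) × ℤ → Bool) :=
  {y | ∀ (i : Fin d → ℤ) (k : ℤ), y (i, k + 1) = true → y (i, k) = true}

/-- The sup-norm `|j|_∞` of an index in `ℤ^(d+1) = ℤ^d × ℤ`. -/
def idxNorm {d : ℕ} (j : (Fin d → ℤ) × ℤ) : ℕ :=
  max (Finset.univ.sup fun t => (j.1 t).natAbs) j.2.natAbs

open scoped Classical in
/-- The distance `d(x,y) = 2^(−min{|j|_∞ : ζ(x)_j ≠ ζ(y)_j})`, `0` if `x = y`. -/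
noncomputable def saDist {d : ℕ} (x y : Conf d) : ℝ :=
  if x = y then 0
  else (2 : ℝ) ^ (-((sInf {n : ℕ | ∃ j, idxNorm j = n ∧ zeta x j ≠ zeta y j} : ℕ) : ℤ))

/-- The measuring device `β_r^m`. -/
noncomputable def beta (r : ℕ) (m : ℤ) (n : Ztilde) : Ztilde :=
  if Ztilde.ofInt (m + r) < n then ⊤
  else if n < Ztilde.ofInt (m - r) then ⊥
  else Ztilde.ofInt (n.toInt - m)

/-- The neighborhood `[−r,r]^d \ {0}` of a sand automaton of radius `r`. -/
def Nbhd (d r : ℕ) := {k : Fin d → ℤ // (∀ t, (k t).natAbs ≤ r) ∧ k ≠ 0}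

/-- The range `R_r^i(x)` of center `i` and radius `r`. -/
noncomputable def saRange {d : ℕ} (r : ℕ) (x : Conf d) (i : Fin d → ℤ) : Nbhd d r → Ztilde :=
  fun k => beta r (x i).toInt (x (i + k.1))

/-- A sand automaton of dimension `d`: a radius `r` and a local rule `f`
taking values in `{−r,…,r}`. -/
structure SandAutomaton (d : ℕ) where
  r : ℕ
  f : (Nbhd d r → Ztilde) → ℤ
  f_mem : ∀ R, (f R).natAbs ≤ r

/-- The global rule `F : C → C` of a sand automaton. -/
noncomputable def SandAutomaton.global {d : ℕ} (S : SandAutomaton d) (x : Conf d) : Conf d :=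
  fun i => if x i = ⊤ ∨ x i = ⊥ then x i
    else Ztilde.ofInt ((x i).toInt + S.f (saRange S.r x i))

/-- The shift map `σ^k`. -/
def shift {d : ℕ} (k : Fin d → ℤ) (x : Conf d) : Conf d := fun i => x (i + k)

/-- The raising map `ρ`. -/
def raise {d : ℕ} (x : Conf d) : Conf d :=
  fun i => if x i = ⊤ ∨ x i = ⊥ then x i else Ztilde.ofInt ((x i).toInt + 1)

/-- A map `F : C → C` is infinity-preserving. -/
def InfinityPreserving {d : ℕ} (F : Conf d → Conf d) : Prop :=
  ∀ (x : Conf d) (i : Fin d → ℤ),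
    (F x i = ⊤ ↔ x i = ⊤) ∧ (F x i = ⊥ ↔ x i = ⊥)

namespace SAux
open Ztilde

lemma ofInt_ne_top (z : ℤ) : Ztilde.ofInt z ≠ ⊤ := by simp [Ztilde.ofInt]
lemma ofInt_ne_bot (z : ℤ) : Ztilde.ofInt z ≠ ⊥ := by simp [Ztilde.ofInt]
lemma toInt_ofInt (z : ℤ) : (Ztilde.ofInt z).toInt = z := by
  simp [Ztilde.ofInt, Ztilde.toInt]
lemma ofInt_le_ofInt {a b : ℤ} : Ztilde.ofInt a ≤ Ztilde.ofInt b ↔ a ≤ b := by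
  simp [Ztilde.ofInt]
lemma ofInt_lt_ofInt {a b : ℤ} : Ztilde.ofInt a < Ztilde.ofInt b ↔ a < b := by
  simp [Ztilde.ofInt]
lemma ofInt_le_top (a : ℤ) : Ztilde.ofInt a ≤ ⊤ := le_top
lemma not_top_le (a : ℤ) : ¬ ((⊤ : Ztilde) ≤ Ztilde.ofInt a) := by
  simp [top_le_iff, ofInt_ne_top]
lemma not_le_bot (a : ℤ) : ¬ (Ztilde.ofInt a ≤ (⊥ : Ztilde)) := by
  simp [le_bot_iff, ofInt_ne_bot]
lemma bot_lt_ofInt (a : ℤ) : (⊥ : Ztilde) < Ztilde.ofInt a :=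
  Ne.bot_lt (ofInt_ne_bot a)
lemma ofInt_lt_top (a : ℤ) : Ztilde.ofInt a < ⊤ :=
  lt_top_iff_ne_top.2 (ofInt_ne_top a)

lemma trichotomy (n : Ztilde) : n = ⊥ ∨ n = ⊤ ∨ n = Ztilde.ofInt n.toInt := by
  induction n using WithBot.recBotCoe with
  | bot => exact Or.inl rfl
  | coe a =>
    induction a using WithTop.recTopCoe with
    | top => exact Or.inr (Or.inl rfl)
    | coe z => exact Or.inr (Or.inr (by simp [Ztilde.ofInt, Ztilde.toInt]))

lemma eq_ofInt {n : Ztilde} (h1 : n ≠ ⊥) (h2 : n ≠ ⊤) : n = Ztilde.ofInt n.toInt := by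
  rcases trichotomy n with h | h | h
  · exact absurd h h1
  · exact absurd h h2
  · exact h

lemma ofInt_lt_iff {a : ℤ} {n : Ztilde} : Ztilde.ofInt a < n ↔ Ztilde.ofInt (a+1) ≤ n := by
  rcases trichotomy n with h | h | h <;> rw [h]
  · simp [not_le_bot, le_bot_iff, ofInt_ne_bot]
  · simp [ofInt_lt_top, ofInt_le_top]
  · rw [ofInt_lt_ofInt, ofInt_le_ofInt]; omega

lemma eq_ofInt_of_le_of_not_le {n : Ztilde} {q : ℤ}
    (h1 : Ztilde.ofInt q ≤ n) (h2 : ¬ Ztilde.ofInt (q+1) ≤ n) : n = Ztilde.ofInt q := by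
  rcases trichotomy n with h | h | h <;> rw [h] at h1 h2 ⊢
  · exact absurd h1 (not_le_bot q)
  · exact absurd (ofInt_le_top (q+1)) h2
  · rw [ofInt_le_ofInt] at h1 h2
    congr 1; omega

end SAux

namespace SAux

lemma beta_bot (r : ℕ) (m : ℤ) : beta r m ⊥ = ⊥ := by
  unfold beta
  rw [if_neg (by exact not_lt_bot), if_pos (bot_lt_ofInt _)]

lemma beta_top (r : ℕ) (m : ℤ) : beta r m ⊤ = ⊤ := by
  unfold beta
  rw [if_pos (ofInt_lt_top _)]

lemma beta_mid (r : ℕ) (m q : ℤ) (h1 : ¬ (m + r < q)) (h2 : ¬ (q < m - r)) :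
    beta r m (Ztilde.ofInt q) = Ztilde.ofInt (q - m) := by
  unfold beta
  rw [if_neg (fun hc => h1 (ofInt_lt_ofInt.1 hc)),
    if_neg (fun hc => h2 (ofInt_lt_ofInt.1 hc)), toInt_ofInt]

lemma beta_hi (r : ℕ) (m q : ℤ) (h1 : m + r < q) :
    beta r m (Ztilde.ofInt q) = ⊤ := by
  unfold beta
  rw [if_pos (ofInt_lt_ofInt.2 h1)]

lemma beta_lo (r : ℕ) (m q : ℤ) (h1 : ¬ (m + r < q)) (h2 : q < m - r) :
    beta r m (Ztilde.ofInt q) = ⊥ := by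
  unfold beta
  rw [if_neg (fun hc => h1 (ofInt_lt_ofInt.1 hc)), if_pos (ofInt_lt_ofInt.2 h2)]

/-- Translation by `j` in `ℤ^(d+1)`: horizontal shift by `j.1`, vertical by `j.2`. -/
def tr {d : ℕ} (j : (Fin d → ℤ) × ℤ) (x : Conf d) : Conf d :=
  fun i => if x (i + j.1) = ⊤ ∨ x (i + j.1) = ⊥ then x (i + j.1)
    else Ztilde.ofInt ((x (i + j.1)).toInt - j.2)

lemma zeta_tr {d : ℕ} (j s : (Fin d → ℤ) × ℤ) (x : Conf d) :
    zeta (tr j x) s = zeta x (j + s) := by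
  show decide (Ztilde.ofInt s.2 ≤ tr j x s.1) = decide (Ztilde.ofInt (j + s).2 ≤ x (j + s).1)
  rw [decide_eq_decide]
  show Ztilde.ofInt s.2 ≤ tr j x s.1 ↔ Ztilde.ofInt (j.2 + s.2) ≤ x (j.1 + s.1)
  unfold tr
  rw [show s.1 + j.1 = j.1 + s.1 from add_comm _ _]
  rcases trichotomy (x (j.1 + s.1)) with h | h | h <;> rw [h]
  · simp [le_bot_iff, ofInt_ne_bot]
  · simp [ofInt_le_top]
  · rw [if_neg (by simp [ofInt_ne_top, ofInt_ne_bot]), toInt_ofInt,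
      ofInt_le_ofInt, ofInt_le_ofInt]
    omega

lemma beta_sub (r : ℕ) (m v : ℤ) (n : Ztilde) :
    beta r (m - v) (if n = ⊤ ∨ n = ⊥ then n else Ztilde.ofInt (n.toInt - v)) = beta r m n := by
  rcases trichotomy n with h | h | h <;> rw [h]
  · rw [if_pos (Or.inr rfl), beta_bot, beta_bot]
  · rw [if_pos (Or.inl rfl), beta_top, beta_top]
  · rw [if_neg (by simp [ofInt_ne_top, ofInt_ne_bot]), toInt_ofInt]
    set q := n.toInt with hq
    by_cases h1 : m + r < q
    · rw [beta_hi r m q h1, beta_hi r (m - v) (q - v) (by omega)]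
    · by_cases h2 : q < m - r
      · rw [beta_lo r m q h1 h2, beta_lo r (m - v) (q - v) (by omega) (by omega)]
      · rw [beta_mid r m q h1 h2, beta_mid r (m - v) (q - v) (by omega) (by omega)]
        congr 1
        omega

lemma global_tr {d : ℕ} (S : SandAutomaton d) (j : (Fin d → ℤ) × ℤ) (x : Conf d) :
    S.global (tr j x) = tr j (S.global x) := by
  funext i
  rcases trichotomy (x (i + j.1)) with h | h | h
  · have h1 : tr j x i = ⊥ := by unfold tr; rw [h, if_pos (Or.inr rfl)]
    have h2 : S.global x (i + j.1) = ⊥ := by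
      show (if x (i + j.1) = ⊤ ∨ x (i + j.1) = ⊥ then x (i + j.1) else _) = ⊥
      rw [h, if_pos (Or.inr rfl)]
    have L : S.global (tr j x) i = ⊥ := by
      show (if tr j x i = ⊤ ∨ tr j x i = ⊥ then tr j x i else _) = ⊥
      rw [h1, if_pos (Or.inr rfl)]
    have R : tr j (S.global x) i = ⊥ := by
      show (if S.global x (i + j.1) = ⊤ ∨ S.global x (i + j.1) = ⊥ then S.global x (i + j.1)
        else _) = ⊥
      rw [h2, if_pos (Or.inr rfl)]
    rw [L, R]
  · have h1 : tr j x i = ⊤ := by unfold tr; rw [h, if_pos (Or.inl rfl)]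
    have h2 : S.global x (i + j.1) = ⊤ := by
      show (if x (i + j.1) = ⊤ ∨ x (i + j.1) = ⊥ then x (i + j.1) else _) = ⊤
      rw [h, if_pos (Or.inl rfl)]
    have L : S.global (tr j x) i = ⊤ := by
      show (if tr j x i = ⊤ ∨ tr j x i = ⊥ then tr j x i else _) = ⊤
      rw [h1, if_pos (Or.inl rfl)]
    have R : tr j (S.global x) i = ⊤ := by
      show (if S.global x (i + j.1) = ⊤ ∨ S.global x (i + j.1) = ⊥ then S.global x (i + j.1)
        else _) = ⊤
      rw [h2, if_pos (Or.inl rfl)]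
    rw [L, R]
  · have hT : x (i + j.1) ≠ ⊤ := by rw [h]; exact ofInt_ne_top _
    have hB : x (i + j.1) ≠ ⊥ := by rw [h]; exact ofInt_ne_bot _
    set q : ℤ := (x (i + j.1)).toInt with hqdef
    have htr : tr j x i = Ztilde.ofInt (q - j.2) := by
      unfold tr; rw [if_neg (by simp [hT, hB])]
    have hR : saRange S.r (tr j x) i = saRange S.r x (i + j.1) := by
      funext k
      show beta S.r ((tr j x i).toInt) (tr j x (i + k.1))
        = beta S.r q (x ((i + j.1) + k.1))
      rw [htr, toInt_ofInt]
      have hidx : (i + k.1) + j.1 = (i + j.1) + k.1 := add_right_comm i k.1 j.1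
      have hb := beta_sub S.r q j.2 (x ((i + j.1) + k.1))
      rw [← hb]
      congr 1
      show (if x ((i + k.1) + j.1) = ⊤ ∨ x ((i + k.1) + j.1) = ⊥ then x ((i + k.1) + j.1)
        else Ztilde.ofInt ((x ((i + k.1) + j.1)).toInt - j.2)) = _
      rw [hidx]
    have hG : S.global x (i + j.1)
        = Ztilde.ofInt (q + S.f (saRange S.r x (i + j.1))) := by
      show (if x (i + j.1) = ⊤ ∨ x (i + j.1) = ⊥ then x (i + j.1) else _) = _
      rw [if_neg (by simp [hT, hB])]
    have L : S.global (tr j x) i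
        = Ztilde.ofInt ((q - j.2) + S.f (saRange S.r x (i + j.1))) := by
      show (if tr j x i = ⊤ ∨ tr j x i = ⊥ then tr j x i
        else Ztilde.ofInt ((tr j x i).toInt + S.f (saRange S.r (tr j x) i))) = _
      rw [hR, htr, if_neg (by simp [ofInt_ne_top, ofInt_ne_bot]), toInt_ofInt]
    have R : tr j (S.global x) i
        = Ztilde.ofInt ((q + S.f (saRange S.r x (i + j.1))) - j.2) := by
      show (if S.global x (i + j.1) = ⊤ ∨ S.global x (i + j.1) = ⊥ then S.global x (i + j.1)
        else Ztilde.ofInt ((S.global x (i + j.1)).toInt - j.2)) = _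
      rw [hG, if_neg (by simp [ofInt_ne_top, ofInt_ne_bot]), toInt_ofInt]
    rw [L, R]
    congr 1
    omega

lemma iterate_tr {d : ℕ} (S : SandAutomaton d) (j : (Fin d → ℤ) × ℤ) (n : ℕ) (x : Conf d) :
    (S.global)^[n] (tr j x) = tr j ((S.global)^[n] x) := by
  induction n generalizing x with
  | zero => rfl
  | succ n ih =>
    rw [Function.iterate_succ_apply, Function.iterate_succ_apply, global_tr, ih]

end SAux

namespace SAux

lemma idxNorm_zero {d : ℕ} : idxNorm (0 : (Fin d → ℤ) × ℤ) = 0 := by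
  simp [idxNorm]

lemma idxNorm_le {d : ℕ} {s : (Fin d → ℤ) × ℤ} {R : ℕ}
    (h1 : ∀ t, (s.1 t).natAbs ≤ R) (h2 : s.2.natAbs ≤ R) : idxNorm s ≤ R :=
  max_le (Finset.sup_le fun t _ => h1 t) h2

lemma fst_le_idxNorm {d : ℕ} (s : (Fin d → ℤ) × ℤ) (t : Fin d) :
    (s.1 t).natAbs ≤ idxNorm s := by
  unfold idxNorm
  exact le_trans (Finset.le_sup (f := fun u => (s.1 u).natAbs) (Finset.mem_univ t)) (le_max_left _ _)

lemma snd_le_idxNorm {d : ℕ} (s : (Fin d → ℤ) × ℤ) : s.2.natAbs ≤ idxNorm s := by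
  unfold idxNorm
  exact le_max_right _ _

lemma idxNorm_add_le {d : ℕ} (a b : (Fin d → ℤ) × ℤ) :
    idxNorm (a + b) ≤ idxNorm a + idxNorm b := by
  apply idxNorm_le
  · intro t
    have h1 := fst_le_idxNorm a t
    have h2 := fst_le_idxNorm b t
    have := Int.natAbs_add_le (a.1 t) (b.1 t)
    show ((a.1 + b.1) t).natAbs ≤ _
    simp only [Pi.add_apply]
    omega
  · have h1 := snd_le_idxNorm a
    have h2 := snd_le_idxNorm b
    have := Int.natAbs_add_le a.2 b.2
    show (a.2 + b.2).natAbs ≤ _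
    omega

lemma zeta_eq_iff {d : ℕ} {x y : Conf d} {i : Fin d → ℤ} {k : ℤ}
    (h : zeta x (i, k) = zeta y (i, k)) :
    (Ztilde.ofInt k ≤ x i ↔ Ztilde.ofInt k ≤ y i) := by
  have : decide (Ztilde.ofInt k ≤ x i) = decide (Ztilde.ofInt k ≤ y i) := h
  exact decide_eq_decide.1 this

lemma beta_congr (r : ℕ) (m : ℤ) (n n' : Ztilde) (hm : m.natAbs ≤ r)
    (hbits : ∀ q : ℤ, q.natAbs ≤ 2*r+1 → (Ztilde.ofInt q ≤ n ↔ Ztilde.ofInt q ≤ n')) :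
    beta r m n = beta r m n' := by
  by_cases c1 : Ztilde.ofInt (m + r) < n
  · have c1' : Ztilde.ofInt (m + r) < n' := by
      rw [ofInt_lt_iff] at c1 ⊢
      exact (hbits (m + r + 1) (by omega)).1 c1
    unfold beta
    rw [if_pos c1, if_pos c1']
  · have c1' : ¬ Ztilde.ofInt (m + r) < n' := by
      rw [ofInt_lt_iff] at c1 ⊢
      exact fun hc => c1 ((hbits (m + r + 1) (by omega)).2 hc)
    by_cases c2 : n < Ztilde.ofInt (m - r)
    · have c2' : n' < Ztilde.ofInt (m - r) := by
        rw [← not_le] at c2 ⊢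
        exact fun hc => c2 ((hbits (m - r) (by omega)).2 hc)
      unfold beta
      rw [if_neg c1, if_neg c1', if_pos c2, if_pos c2']
    · have h2 : Ztilde.ofInt (m - r) ≤ n := not_lt.1 c2
      have h1 : ¬ Ztilde.ofInt (m + r + 1) ≤ n := by rw [← ofInt_lt_iff]; exact c1
      have hnB : n ≠ ⊥ := fun hc => (by rw [hc] at h2; exact absurd h2 (not_le_bot _))
      have hnT : n ≠ ⊤ := fun hc => (by rw [hc] at h1; exact h1 (ofInt_le_top _))
      have hn : n = Ztilde.ofInt n.toInt := eq_ofInt hnB hnT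
      set q := n.toInt with hqd
      have hq1 : m - r ≤ q := by rw [hn] at h2; exact ofInt_le_ofInt.1 h2
      have hq2 : q ≤ m + r := by
        rw [hn] at h1
        by_contra hc
        exact h1 (ofInt_le_ofInt.2 (by omega))
      have hqa : q.natAbs ≤ 2*r+1 := by omega
      have hb1 : Ztilde.ofInt q ≤ n' := (hbits q hqa).1 (by rw [hn])
      have hb2 : ¬ Ztilde.ofInt (q+1) ≤ n' := by
        intro hc
        have := (hbits (q+1) (by omega)).2 hc
        rw [hn] at this
        exact absurd (ofInt_le_ofInt.1 this) (by omega)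
      have hn' : n' = Ztilde.ofInt q := eq_ofInt_of_le_of_not_le hb1 hb2
      rw [hn, hn']

lemma local_rule {d : ℕ} (S : SandAutomaton d) {x y : Conf d}
    (h : ∀ s : (Fin d → ℤ) × ℤ, idxNorm s ≤ 2 * S.r + 2 → zeta x s = zeta y s) :
    zeta (S.global x) 0 = zeta (S.global y) 0 := by
  set r := S.r with hr
  have hbit : ∀ (i : Fin d → ℤ) (q : ℤ), (∀ t, (i t).natAbs ≤ r) → q.natAbs ≤ 2*r+1 →
      (Ztilde.ofInt q ≤ x i ↔ Ztilde.ofInt q ≤ y i) := by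
    intro i q hi hq
    exact zeta_eq_iff (h (i, q) (idxNorm_le (fun t => le_trans (hi t) (by omega)) (by omega)))
  have hzero : ∀ t, ((0 : Fin d → ℤ) t).natAbs ≤ r := by
    intro t; simp
  show decide (Ztilde.ofInt (0:ℤ) ≤ S.global x 0) = decide (Ztilde.ofInt (0:ℤ) ≤ S.global y 0)
  rw [decide_eq_decide]
  by_cases hhi : Ztilde.ofInt (r + 1) ≤ x 0
  · have hhi' : Ztilde.ofInt (r + 1) ≤ y 0 := (hbit 0 (r+1) hzero (by omega)).1 hhi
    have claim : ∀ z : Conf d, Ztilde.ofInt (r+1) ≤ z 0 → Ztilde.ofInt 0 ≤ S.global z 0 := by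
      intro z hz
      rcases trichotomy (z 0) with h0 | h0 | h0
      · rw [h0] at hz; exact absurd hz (not_le_bot _)
      · have hG : S.global z 0 = ⊤ := by
          show (if z 0 = ⊤ ∨ z 0 = ⊥ then z 0 else _) = ⊤
          rw [h0, if_pos (Or.inl rfl)]
        rw [hG]; exact ofInt_le_top 0
      · have hG : S.global z 0
            = Ztilde.ofInt ((z 0).toInt + S.f (saRange r z 0)) := by
          show (if z 0 = ⊤ ∨ z 0 = ⊥ then z 0 else _) = _
          rw [if_neg (by rw [h0]; simp [ofInt_ne_top, ofInt_ne_bot])]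
        rw [h0] at hz
        have hz' : (r:ℤ) + 1 ≤ (z 0).toInt := ofInt_le_ofInt.1 hz
        have hf := S.f_mem (saRange r z 0)
        rw [hG]
        exact ofInt_le_ofInt.2 (by omega)
    exact iff_of_true (claim x hhi) (claim y hhi')
  · by_cases hlo : Ztilde.ofInt (-(r:ℤ)) ≤ x 0
    · -- middle case
      have hxB : x 0 ≠ ⊥ := fun hc => (by rw [hc] at hlo; exact absurd hlo (not_le_bot _))
      have hxT : x 0 ≠ ⊤ := fun hc => (by rw [hc] at hhi; exact hhi (ofInt_le_top _))
      have hx : x 0 = Ztilde.ofInt (x 0).toInt := eq_ofInt hxB hxT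
      set m := (x 0).toInt with hmd
      have hm1 : -(r:ℤ) ≤ m := by rw [hx] at hlo; exact ofInt_le_ofInt.1 hlo
      have hm2 : m ≤ (r:ℤ) := by
        rw [hx] at hhi
        by_contra hc
        exact hhi (ofInt_le_ofInt.2 (by omega))
      have hy1 : Ztilde.ofInt m ≤ y 0 := (hbit 0 m hzero (by omega)).1 (by rw [hx])
      have hy2 : ¬ Ztilde.ofInt (m+1) ≤ y 0 := by
        intro hc
        have := (hbit 0 (m+1) hzero (by omega)).2 hc
        rw [hx] at this
        exact absurd (ofInt_le_ofInt.1 this) (by omega)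
      have hy : y 0 = Ztilde.ofInt m := eq_ofInt_of_le_of_not_le hy1 hy2
      have hRange : saRange r x 0 = saRange r y 0 := by
        funext k
        show beta r ((x 0).toInt) (x (0 + k.1)) = beta r ((y 0).toInt) (y (0 + k.1))
        rw [hy, toInt_ofInt, ← hmd, zero_add]
        exact beta_congr r m (x k.1) (y k.1) (by omega)
          (fun q hq => hbit k.1 q (fun t => k.2.1 t) (by omega))
      have hGx : S.global x 0 = Ztilde.ofInt (m + S.f (saRange r x 0)) := by
        show (if x 0 = ⊤ ∨ x 0 = ⊥ then x 0 else _) = _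
        rw [if_neg (by simp [hxT, hxB])]
      have hGy : S.global y 0 = Ztilde.ofInt (m + S.f (saRange r y 0)) := by
        show (if y 0 = ⊤ ∨ y 0 = ⊥ then y 0 else _) = _
        rw [if_neg (by rw [hy]; simp [ofInt_ne_top, ofInt_ne_bot]), hy, toInt_ofInt]
      rw [hGx, hGy, hRange]
    · -- low case
      have hlo' : ¬ Ztilde.ofInt (-(r:ℤ)) ≤ y 0 :=
        fun hc => hlo ((hbit 0 (-(r:ℤ)) hzero (by omega)).2 hc)
      have claim : ∀ z : Conf d, ¬ Ztilde.ofInt (-(r:ℤ)) ≤ z 0 →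
          ¬ Ztilde.ofInt 0 ≤ S.global z 0 := by
        intro z hz
        rcases trichotomy (z 0) with h0 | h0 | h0
        · have hG : S.global z 0 = ⊥ := by
            show (if z 0 = ⊤ ∨ z 0 = ⊥ then z 0 else _) = ⊥
            rw [h0, if_pos (Or.inr rfl)]
          rw [hG]; exact not_le_bot 0
        · rw [h0] at hz; exact absurd (ofInt_le_top _) hz
        · have hG : S.global z 0
              = Ztilde.ofInt ((z 0).toInt + S.f (saRange r z 0)) := by
            show (if z 0 = ⊤ ∨ z 0 = ⊥ then z 0 else _) = _
            rw [if_neg (by rw [h0]; simp [ofInt_ne_top, ofInt_ne_bot])]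
          rw [h0] at hz
          have hz' : ¬ (-(r:ℤ) ≤ (z 0).toInt) := fun hc => hz (ofInt_le_ofInt.2 hc)
          have hf := S.f_mem (saRange r z 0)
          rw [hG]
          intro hc
          exact absurd (ofInt_le_ofInt.1 hc) (by omega)
      exact iff_of_false (claim x hlo) (claim y hlo')

lemma local_rule_at {d : ℕ} (S : SandAutomaton d) {x y : Conf d} (j : (Fin d → ℤ) × ℤ)
    (h : ∀ s, idxNorm s ≤ 2*S.r+2 → zeta x (j+s) = zeta y (j+s)) :
    zeta (S.global x) j = zeta (S.global y) j := by
  have h' : ∀ s, idxNorm s ≤ 2*S.r+2 → zeta (tr j x) s = zeta (tr j y) s := by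
    intro s hs; rw [zeta_tr, zeta_tr]; exact h s hs
  have key := local_rule S h'
  rw [global_tr, global_tr, zeta_tr, zeta_tr, add_zero] at key
  exact key

lemma local_iter {d : ℕ} (S : SandAutomaton d) (n : ℕ) :
    ∀ (x y : Conf d) (j : (Fin d → ℤ) × ℤ),
    (∀ s, idxNorm s ≤ n * (2 * S.r + 2) → zeta x (j + s) = zeta y (j + s)) →
    zeta ((S.global)^[n] x) j = zeta ((S.global)^[n] y) j := by
  induction n with
  | zero =>
    intro x y j h
    have := h 0 (by rw [idxNorm_zero]; exact Nat.zero_le _)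
    rwa [add_zero] at this
  | succ n ih =>
    intro x y j h
    rw [Function.iterate_succ_apply, Function.iterate_succ_apply]
    apply ih (S.global x) (S.global y) j
    intro s hs
    apply local_rule_at S (j + s)
    intro u hu
    rw [add_assoc]
    apply h (s + u)
    calc idxNorm (s + u) ≤ idxNorm s + idxNorm u := idxNorm_add_le s u
      _ ≤ n * (2 * S.r + 2) + (2 * S.r + 2) := Nat.add_le_add hs hu
      _ = (n+1) * (2 * S.r + 2) := by ring

end SAux

namespace SAux

lemma exists_bit_ne {a b : Ztilde} (hab : a < b) :
    ∃ q : ℤ, ¬ (Ztilde.ofInt q ≤ a) ∧ Ztilde.ofInt q ≤ b := by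
  have tri : ∀ c : Ztilde, c = ⊥ ∨ c = ⊤ ∨ ∃ z, c = Ztilde.ofInt z := by
    intro c
    rcases trichotomy c with h | h | h
    · exact Or.inl h
    · exact Or.inr (Or.inl h)
    · exact Or.inr (Or.inr ⟨c.toInt, h⟩)
  rcases tri a with rfl | rfl | ⟨za, rfl⟩
  · rcases tri b with rfl | rfl | ⟨zb, rfl⟩
    · exact absurd hab (lt_irrefl _)
    · exact ⟨0, not_le_bot 0, ofInt_le_top 0⟩
    · exact ⟨zb, not_le_bot _, le_refl _⟩
  · exact absurd hab not_top_lt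
  · rcases tri b with rfl | rfl | ⟨zb, rfl⟩
    · exact absurd hab not_lt_bot
    · refine ⟨za + 1, ?_, ofInt_le_top _⟩
      intro hc
      exact absurd (ofInt_le_ofInt.1 hc) (by omega)
    · have := ofInt_lt_ofInt.1 hab
      refine ⟨zb, ?_, le_refl _⟩
      intro hc
      exact absurd (ofInt_le_ofInt.1 hc) (by omega)

lemma zeta_ne_of_ne {d : ℕ} {x y : Conf d} (h : x ≠ y) : ∃ j, zeta x j ≠ zeta y j := by
  have hi : ∃ i, x i ≠ y i := by
    by_contra hc
    push_neg at hc
    exact h (funext hc)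
  obtain ⟨i, hi⟩ := hi
  rcases lt_or_gt_of_ne hi with hlt | hgt
  · obtain ⟨q, hq1, hq2⟩ := exists_bit_ne hlt
    exact ⟨(i, q), by simp [zeta, hq1, hq2]⟩
  · obtain ⟨q, hq1, hq2⟩ := exists_bit_ne hgt
    exact ⟨(i, q), by simp [zeta, hq1, hq2]⟩

lemma zeta_injective {d : ℕ} {x y : Conf d} (h : ∀ j, zeta x j = zeta y j) : x = y := by
  by_contra hc
  obtain ⟨j, hj⟩ := zeta_ne_of_ne hc
  exact hj (h j)

lemma saDist_nonneg {d : ℕ} (x y : Conf d) : 0 ≤ saDist x y := by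
  unfold saDist
  split_ifs
  · exact le_refl 0
  · positivity

lemma dist_le_of_agree {d : ℕ} {x y : Conf d} {K : ℕ}
    (h : ∀ j, idxNorm j ≤ K → zeta x j = zeta y j) :
    saDist x y ≤ (2:ℝ) ^ (-(K:ℤ) - 1) := by
  unfold saDist
  split_ifs with hxy
  · positivity
  · set Sset := {n : ℕ | ∃ j, idxNorm j = n ∧ zeta x j ≠ zeta y j} with hSd
    have hne : Sset.Nonempty := by
      obtain ⟨j, hj⟩ := zeta_ne_of_ne hxy
      exact ⟨idxNorm j, j, rfl, hj⟩
    obtain ⟨j0, hj0, hne0⟩ := Nat.sInf_mem hne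
    have hK : K < sInf Sset := by
      by_contra hc
      push_neg at hc
      exact hne0 (h j0 (by omega))
    apply zpow_le_zpow_right₀ one_le_two
    omega

lemma agree_of_dist_lt {d : ℕ} {x y : Conf d} {K : ℕ}
    (h : saDist x y < (2:ℝ) ^ (-(K:ℤ))) {j : (Fin d → ℤ) × ℤ} (hj : idxNorm j ≤ K) :
    zeta x j = zeta y j := by
  by_cases hxy : x = y
  · rw [hxy]
  · unfold saDist at h
    rw [if_neg hxy] at h
    by_contra hne
    have hle : sInf {n : ℕ | ∃ j, idxNorm j = n ∧ zeta x j ≠ zeta y j} ≤ idxNorm j :=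
      Nat.sInf_le ⟨j, rfl, hne⟩
    exact absurd h (not_lt.2 (zpow_le_zpow_right₀ one_le_two (by omega)))

lemma iter_reduce {α : Type*} (F : α → α) {n p : ℕ} (hp : 0 < p) (hFp : F^[n+p] = F^[n]) :
    ∀ m, ∃ m', m' ≤ n + p ∧ F^[m] = F^[m'] := by
  intro m
  induction m using Nat.strong_induction_on with
  | _ m ih =>
    by_cases hm : m ≤ n + p
    · exact ⟨m, hm, rfl⟩
    · obtain ⟨m', h1, h2⟩ := ih (m - p) (by omega)
      refine ⟨m', h1, ?_⟩
      have key : F^[m] = F^[m - p] := by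
        conv_lhs => rw [show m = (m - (n+p)) + (n + p) by omega]
        rw [Function.iterate_add, hFp, ← Function.iterate_add,
          show m - (n+p) + n = m - p by omega]
      rw [key, h2]

lemma periodic_implies_equicont {d : ℕ} (S : SandAutomaton d) {n p : ℕ} (hp : 0 < p)
    (hFp : (S.global)^[n+p] = (S.global)^[n]) :
    ∀ ε : ℝ, 0 < ε → ∃ δ : ℝ, 0 < δ ∧ ∀ x y : Conf d, saDist x y < δ →
      ∀ m : ℕ, saDist ((S.global)^[m] x) ((S.global)^[m] y) < ε := by
  intro ε hε
  obtain ⟨k, hk⟩ : ∃ k : ℕ, (1/2:ℝ)^k < ε := exists_pow_lt_of_lt_one hε (by norm_num)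
  have hk' : (2:ℝ) ^ (-(k:ℤ) - 1) < ε := by
    calc (2:ℝ) ^ (-(k:ℤ) - 1) ≤ 2 ^ (-(k:ℤ)) := zpow_le_zpow_right₀ one_le_two (by omega)
      _ = (1/2:ℝ)^k := by rw [zpow_neg, zpow_natCast, one_div, inv_pow]
      _ < ε := hk
  set K : ℕ := k + (n + p) * (2 * S.r + 2) with hKd
  refine ⟨(2:ℝ)^(-(K:ℤ)), by positivity, ?_⟩
  intro x y hxy m
  obtain ⟨m', hm'le, hm'eq⟩ := iter_reduce _ hp hFp m
  rw [hm'eq]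
  have hagree : ∀ j, idxNorm j ≤ k →
      zeta ((S.global)^[m'] x) j = zeta ((S.global)^[m'] y) j := by
    intro j hj
    apply local_iter S m'
    intro s hs
    apply agree_of_dist_lt hxy
    calc idxNorm (j+s) ≤ idxNorm j + idxNorm s := idxNorm_add_le j s
      _ ≤ k + (n+p)*(2*S.r+2) :=
          Nat.add_le_add hj (le_trans hs (Nat.mul_le_mul_right _ hm'le))
  calc saDist _ _ ≤ (2:ℝ)^(-(k:ℤ)-1) := dist_le_of_agree hagree
    _ < ε := hk'

end SAux

namespace SAux

open scoped Classical

lemma equicont_implies_periodic {d : ℕ} (S : SandAutomaton d)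
    (he : ∀ ε : ℝ, 0 < ε → ∃ δ : ℝ, 0 < δ ∧ ∀ x y : Conf d, saDist x y < δ →
        ∀ m : ℕ, saDist ((S.global)^[m] x) ((S.global)^[m] y) < ε) :
    ∃ n p : ℕ, 0 < p ∧ (S.global)^[n+p] = (S.global)^[n] := by
  obtain ⟨δ, hδ, hδp⟩ := he 1 one_pos
  obtain ⟨K, hK⟩ : ∃ K : ℕ, (2:ℝ)^(-(K:ℤ)-1) < δ := by
    obtain ⟨k, hk⟩ : ∃ k : ℕ, (1/2:ℝ)^k < δ := exists_pow_lt_of_lt_one hδ (by norm_num)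
    refine ⟨k, lt_of_le_of_lt ?_ hk⟩
    calc (2:ℝ) ^ (-(k:ℤ) - 1) ≤ 2 ^ (-(k:ℤ)) := zpow_le_zpow_right₀ one_le_two (by omega)
      _ = (1/2:ℝ)^k := by rw [zpow_neg, zpow_natCast, one_div, inv_pow]
  have det : ∀ x y : Conf d, (∀ s, idxNorm s ≤ K → zeta x s = zeta y s) →
      ∀ m, zeta ((S.global)^[m] x) 0 = zeta ((S.global)^[m] y) 0 := by
    intro x y hxy m
    have hdlt : saDist x y < δ := lt_of_le_of_lt (dist_le_of_agree hxy) hK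
    have h1 := hδp x y hdlt m
    apply agree_of_dist_lt (K := 0) ?_ (by rw [idxNorm_zero])
    rw [show (-((0:ℕ):ℤ)) = 0 by simp, zpow_zero]
    exact h1
  let W := {j : (Fin d → ℤ) × ℤ // idxNorm j ≤ K}
  have finW : Finite W := by
    let emb : W → (Fin d → Set.Icc (-(K:ℤ)) K) × Set.Icc (-(K:ℤ)) K := fun w =>
      (fun t => ⟨w.1.1 t, Set.mem_Icc.2
          (by have h1 := fst_le_idxNorm w.1 t; have h2 := w.2; omega)⟩,
       ⟨w.1.2, Set.mem_Icc.2
          (by have h1 := snd_le_idxNorm w.1; have h2 := w.2; omega)⟩)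
    have hemb : Function.Injective emb := by
      intro u v huv
      apply Subtype.ext
      have h1 := congrArg Prod.fst huv
      have h2 := congrArg Prod.snd huv
      apply Prod.ext
      · funext t
        have := congrFun h1 t
        exact Subtype.ext_iff.1 this
      · exact Subtype.ext_iff.1 h2
    exact Finite.of_injective emb hemb
  let e : ℕ → ((W → Bool) → Bool) := fun m P =>
    if h : ∃ z : Conf d, (fun w : W => zeta z w.1) = P then
      zeta ((S.global)^[m] h.choose) 0 else false
  have eval : ∀ (m : ℕ) (P : W → Bool) (h : ∃ z : Conf d, (fun w : W => zeta z w.1) = P),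
      e m P = zeta ((S.global)^[m] h.choose) 0 := by
    intro m P h
    show dite _ _ _ = _
    rw [dif_pos h]
  obtain ⟨a, b, hab, heab⟩ : ∃ a b : ℕ, a < b ∧ e a = e b := by
    obtain ⟨u, v, huv, heq⟩ := Finite.exists_ne_map_eq_of_infinite e
    rcases lt_or_gt_of_ne huv with h | h
    · exact ⟨u, v, h, heq⟩
    · exact ⟨v, u, h, heq.symm⟩
  refine ⟨a, b - a, by omega, ?_⟩
  have hglob : (S.global)^[b] = (S.global)^[a] := by
    funext x
    apply zeta_injective
    intro j
    set P : W → Bool := fun w => zeta (tr j x) w.1 with hPd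
    have hreal : ∃ z : Conf d, (fun w : W => zeta z w.1) = P := ⟨tr j x, rfl⟩
    have hchoose : ∀ s, idxNorm s ≤ K → zeta hreal.choose s = zeta (tr j x) s := by
      intro s hs
      exact congrFun hreal.choose_spec ⟨s, hs⟩
    have key : ∀ m : ℕ, zeta ((S.global)^[m] x) j = e m P := by
      intro m
      have s1 : zeta ((S.global)^[m] x) j = zeta (tr j ((S.global)^[m] x)) 0 := by
        rw [zeta_tr, add_zero]
      have s2 : tr j ((S.global)^[m] x) = (S.global)^[m] (tr j x) :=
        (iterate_tr S j m x).symm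
      have s3 : zeta ((S.global)^[m] (tr j x)) 0 = zeta ((S.global)^[m] hreal.choose) 0 :=
        det (tr j x) hreal.choose (fun s hs => (hchoose s hs).symm) m
      rw [s1, s2, s3, eval m P hreal]
    rw [key b, key a, ← heab]
  rw [show a + (b - a) = b by omega, hglob]

end SAux

namespace SAux

open scoped Classical

instance finite_window (d K : ℕ) : Finite {j : (Fin d → ℤ) × ℤ // idxNorm j ≤ K} := by
  let emb : {j : (Fin d → ℤ) × ℤ // idxNorm j ≤ K} →
      (Fin d → Set.Icc (-(K:ℤ)) K) × Set.Icc (-(K:ℤ)) K := fun w =>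
    (fun t => ⟨w.1.1 t, Set.mem_Icc.2
        (by have h1 := fst_le_idxNorm w.1 t; have h2 := w.2; omega)⟩,
     ⟨w.1.2, Set.mem_Icc.2
        (by have h1 := snd_le_idxNorm w.1; have h2 := w.2; omega)⟩)
  have hemb : Function.Injective emb := by
    intro u v huv
    apply Subtype.ext
    have h1 := congrArg Prod.fst huv
    have h2 := congrArg Prod.snd huv
    apply Prod.ext
    · funext t
      exact Subtype.ext_iff.1 (congrFun h1 t)
    · exact Subtype.ext_iff.1 h2
  exact Finite.of_injective emb hemb

/-- The type of radius-`R` patterns paired with their radius. -/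
abbrev PatA (d : ℕ) := Σ R : ℕ, ({s : (Fin d → ℤ) × ℤ // idxNorm s ≤ R} → Bool)

noncomputable def eA {d : ℕ} (a : PatA d) : ℕ :=
  Nat.pair ((Countable.exists_injective_nat (PatA d)).choose a) (a.1 + 1)

lemma eA_inj {d : ℕ} : Function.Injective (eA (d := d)) := by
  intro a b hab
  have h := Nat.pair_eq_pair.1 hab
  exact (Countable.exists_injective_nat (PatA d)).choose_spec h.1

lemma eA_ge {d : ℕ} (a : PatA d) : a.1 + 1 ≤ eA a := Nat.right_le_pair _ _

noncomputable def cA {d : ℕ} (a : PatA d) : ℤ := 2 * (eA a : ℤ)^2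

lemma block_disjoint {d : ℕ} {a b : PatA d} {m : ℤ}
    (ha : (m - cA a).natAbs ≤ a.1) (hb : (m - cA b).natAbs ≤ b.1) : a = b := by
  by_contra hne
  have hE : eA a ≠ eA b := fun hc => hne (eA_inj hc)
  have key : ∀ u v : PatA d, eA u < eA v → (m - cA u).natAbs ≤ u.1 →
      (m - cA v).natAbs ≤ v.1 → False := by
    intro u v huv hu hv
    have h1 : (u.1:ℤ) + 1 ≤ eA u := by exact_mod_cast eA_ge u
    have h2 : (v.1:ℤ) + 1 ≤ eA v := by exact_mod_cast eA_ge v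
    have h3 : (eA u : ℤ) + 1 ≤ eA v := by exact_mod_cast huv
    set E1 := (eA u : ℤ)
    set E2 := (eA v : ℤ)
    have hu' : -(u.1:ℤ) ≤ m - cA u ∧ m - cA u ≤ u.1 := by omega
    have hv' : -(v.1:ℤ) ≤ m - cA v ∧ m - cA v ≤ v.1 := by omega
    have heq : (m - cA u) - (m - cA v) = 2*E2^2 - 2*E1^2 := by
      unfold cA
      ring
    nlinarith [mul_pos (by omega : (0:ℤ) < E2 - E1) (by omega : (0:ℤ) < E2 + E1)]
  rcases lt_or_gt_of_ne hE with h | h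
  · exact absurd (key a b h ha hb) not_false
  · exact absurd (key b a h hb ha) not_false

noncomputable def repA {d : ℕ} (a : PatA d) : Conf d :=
  if h : ∃ x : Conf d, (fun s : {s : (Fin d → ℤ) × ℤ // idxNorm s ≤ a.1} => zeta x s.1) = a.2
  then h.choose else fun _ => ⊥

noncomputable def offA {d : ℕ} (hd : 0 < d) (a : PatA d) : Fin d → ℤ :=
  fun t => if t = ⟨0, hd⟩ then cA a else 0

noncomputable def richZ {d : ℕ} (hd : 0 < d) : Conf d :=
  fun i => if h : ∃ a : PatA d, ((i ⟨0, hd⟩) - cA a).natAbs ≤ a.1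
    then repA h.choose (i - offA hd h.choose) else ⊥

lemma rich_spec {d : ℕ} (hd : 0 < d) (R : ℕ) (x : Conf d) :
    ∃ j : (Fin d → ℤ) × ℤ, ∀ s, idxNorm s ≤ R →
      zeta (richZ hd) (j + s) = zeta x s := by
  set a : PatA d := ⟨R, fun s => zeta x s.1⟩ with had
  have haR : a.1 = R := rfl
  have hx : ∃ z : Conf d,
      (fun s : {s : (Fin d → ℤ) × ℤ // idxNorm s ≤ a.1} => zeta z s.1) = a.2 := ⟨x, rfl⟩
  have hrep : (fun s : {s : (Fin d → ℤ) × ℤ // idxNorm s ≤ a.1} => zeta (repA a) s.1) = a.2 := by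
    unfold repA
    rw [dif_pos hx]
    exact hx.choose_spec
  refine ⟨(offA hd a, 0), ?_⟩
  intro s hs
  have hblk : (((offA hd a + s.1) ⟨0, hd⟩) - cA a).natAbs ≤ a.1 := by
    have : (offA hd a + s.1) ⟨0, hd⟩ = cA a + s.1 ⟨0, hd⟩ := by
      show offA hd a ⟨0, hd⟩ + s.1 ⟨0, hd⟩ = _
      unfold offA
      rw [if_pos rfl]
    rw [this]
    have hb := fst_le_idxNorm s ⟨0, hd⟩
    have hb2 : (s.1 ⟨0, hd⟩).natAbs ≤ R := le_trans hb hs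
    omega
  have hex : ∃ a' : PatA d, (((offA hd a + s.1) ⟨0, hd⟩) - cA a').natAbs ≤ a'.1 := ⟨a, hblk⟩
  have huniq : hex.choose = a := block_disjoint hex.choose_spec hblk
  have hz : richZ hd (offA hd a + s.1) = repA a s.1 := by
    show (if h : ∃ a' : PatA d, (((offA hd a + s.1) ⟨0, hd⟩) - cA a').natAbs ≤ a'.1
      then repA h.choose ((offA hd a + s.1) - offA hd h.choose) else ⊥) = _
    rw [dif_pos hex, huniq, add_sub_cancel_left]
  show decide (Ztilde.ofInt ((offA hd a, (0:ℤ)) + s).2 ≤ richZ hd ((offA hd a, (0:ℤ)) + s).1)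
    = zeta x s
  have h1 : ((offA hd a, (0:ℤ)) + s).1 = offA hd a + s.1 := rfl
  have h2 : ((offA hd a, (0:ℤ)) + s).2 = s.2 := zero_add s.2
  rw [h1, h2, hz]
  have h3 : decide (Ztilde.ofInt s.2 ≤ repA a s.1) = zeta (repA a) s := by
    unfold zeta
    rfl
  rw [h3]
  have h4 := congrFun hrep ⟨s, hs⟩
  exact h4

lemma pointwise_implies_periodic {d : ℕ} (hd : 0 < d) (S : SandAutomaton d)
    (h : ∀ x : Conf d, ∃ n p : ℕ, 0 < p ∧ (S.global)^[n+p] x = (S.global)^[n] x) :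
    ∃ n p : ℕ, 0 < p ∧ (S.global)^[n+p] = (S.global)^[n] := by
  obtain ⟨n, p, hp, hz⟩ := h (richZ hd)
  refine ⟨n, p, hp, ?_⟩
  funext x
  apply zeta_injective
  intro j
  set R : ℕ := (n + p) * (2 * S.r + 2) with hRd
  obtain ⟨j', hj'⟩ := rich_spec hd R (tr j x)
  have hagree : ∀ m : ℕ, m ≤ n + p →
      zeta ((S.global)^[m] (richZ hd)) j' = zeta ((S.global)^[m] (tr j x)) 0 := by
    intro m hm
    have step1 : zeta ((S.global)^[m] (richZ hd)) j'
        = zeta ((S.global)^[m] (tr j' (richZ hd))) 0 := by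
      rw [iterate_tr, zeta_tr, add_zero]
    rw [step1]
    apply local_iter S m
    intro s hs
    rw [zeta_tr, zero_add]
    exact hj' s (le_trans hs (Nat.mul_le_mul_right _ hm))
  have key : ∀ m : ℕ, m ≤ n + p →
      zeta ((S.global)^[m] x) j = zeta ((S.global)^[m] (richZ hd)) j' := by
    intro m hm
    rw [show zeta ((S.global)^[m] x) j = zeta ((S.global)^[m] (tr j x)) 0 by
      rw [iterate_tr, zeta_tr, add_zero]]
    exact (hagree m hm).symm
  rw [key (n+p) (le_refl _), key n (by omega), hz]

end SAux
/-- For the global rule `F` of a sand automaton, the following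
are equivalent: (1) `F` is equicontinuous; (2) `F` is ultimately periodic;
(3) every configuration is ultimately periodic for `F`. -/
theorem sa_equicontinuous_iff_ultimately_periodic (d : ℕ) (hd : 1 ≤ d)
    (S : SandAutomaton d) (F : Conf d → Conf d) (hF : F = S.global) :
    ((∀ ε : ℝ, 0 < ε → ∃ δ : ℝ, 0 < δ ∧ ∀ x y : Conf d, saDist x y < δ →
        ∀ n : ℕ, saDist (F^[n] x) (F^[n] y) < ε) ↔
      (∃ (n p : ℕ), 0 < p ∧ F^[n + p] = F^[n])) ∧
    ((∃ (n p : ℕ), 0 < p ∧ F^[n + p] = F^[n]) ↔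
      (∀ x : Conf d, ∃ (n p : ℕ), 0 < p ∧ F^[n + p] x = F^[n] x)) := by
  subst hF
  refine ⟨⟨fun he => SAux.equicont_implies_periodic S he, ?_⟩,
    fun ⟨n, p, hp, hFp⟩ x => ⟨n, p, hp, congrFun hFp x⟩,
    fun h => SAux.pointwise_implies_periodic hd S h⟩
  rintro ⟨n, p, hp, hFp⟩
  exact SAux.periodic_implies_equicont S hp hFp
end

section
/- There are no positively expansive sand automata: for every sand automaton with global rule F and every ε > 0, there exist two distinct configurations x, y ∈ C such that d(F^n(x), F^n(y)) < ε for all n ∈ ℕ. -/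
open Filter

-- aux lemmas to insert before theorem

def constConf (d : ℕ) (c : ℤ) : Conf d := fun _ => Ztilde.ofInt c

lemma Ztilde.toInt_ofInt (z : ℤ) : (Ztilde.ofInt z).toInt = z := rfl

lemma Ztilde.ofInt_ne_top (z : ℤ) : Ztilde.ofInt z ≠ ⊤ := by
  simp [Ztilde.ofInt]

lemma Ztilde.ofInt_ne_bot (z : ℤ) : Ztilde.ofInt z ≠ ⊥ := by
  simp [Ztilde.ofInt]

lemma Ztilde.ofInt_le_ofInt {a b : ℤ} : Ztilde.ofInt a ≤ Ztilde.ofInt b ↔ a ≤ b := by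
  simp [Ztilde.ofInt]

lemma Ztilde.ofInt_lt_ofInt {a b : ℤ} : Ztilde.ofInt a < Ztilde.ofInt b ↔ a < b := by
  simp [Ztilde.ofInt]

lemma Ztilde.ofInt_inj {a b : ℤ} : Ztilde.ofInt a = Ztilde.ofInt b ↔ a = b := by
  simp [Ztilde.ofInt]

lemma beta_const (r : ℕ) (c : ℤ) : beta r c (Ztilde.ofInt c) = Ztilde.ofInt 0 := by
  unfold beta
  rw [if_neg, if_neg]
  · simp [Ztilde.toInt_ofInt]
  · rw [Ztilde.ofInt_lt_ofInt]; omega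
  · rw [Ztilde.ofInt_lt_ofInt]; omega

lemma global_const (d : ℕ) (S : SandAutomaton d) (c : ℤ) :
    S.global (constConf d c) = constConf d (c + S.f (fun _ => Ztilde.ofInt 0)) := by
  funext i
  have hr : saRange S.r (constConf d c) i = fun _ => Ztilde.ofInt 0 := by
    funext k
    simp [saRange, constConf, Ztilde.toInt_ofInt, beta_const]
  simp [SandAutomaton.global, constConf, Ztilde.ofInt_ne_top, Ztilde.ofInt_ne_bot,
    Ztilde.toInt_ofInt, hr]

lemma iterate_const (d : ℕ) (S : SandAutomaton d) (c : ℤ) (n : ℕ) :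
    S.global^[n] (constConf d c) = constConf d (c + n * S.f (fun _ => Ztilde.ofInt 0)) := by
  induction n with
  | zero => simp [constConf]
  | succ n ih =>
      rw [Function.iterate_succ_apply', ih, global_const]
      congr 1
      push_cast
      ring

lemma zeta_const (d : ℕ) (m : ℤ) (j : (Fin d → ℤ) × ℤ) :
    zeta (constConf d m) j = decide (j.2 ≤ m) := by
  simp [zeta, constConf, Ztilde.ofInt_le_ofInt]

lemma dist_const_lt (d : ℕ) (m : ℤ) (M : ℕ) (hM : M ≤ (m + 1).natAbs)
    (ε : ℝ) (hε : (2 : ℝ) ^ (-(M : ℤ)) < ε) :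
    saDist (constConf d m) (constConf d (m + 1)) < ε := by
  classical
  have hne : constConf d m ≠ constConf d (m + 1) := by
    intro h
    have := congrFun h 0
    rw [constConf, constConf, Ztilde.ofInt_inj] at this
    omega
  rw [saDist, if_neg hne]
  set T : Set ℕ := {n : ℕ | ∃ j, idxNorm j = n ∧
      zeta (constConf d m) j ≠ zeta (constConf d (m + 1)) j} with hT
  have hmemIff : ∀ j : (Fin d → ℤ) × ℤ,
      (zeta (constConf d m) j ≠ zeta (constConf d (m + 1)) j) ↔ j.2 = m + 1 := by
    intro j
    rw [zeta_const, zeta_const]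
    rcases le_or_gt j.2 m with h | h
    · simp [h]; omega
    · rcases eq_or_lt_of_le (show m + 1 ≤ j.2 by omega) with h2 | h2
      · simp [← h2]
      · simp [show ¬ j.2 ≤ m by omega, show ¬ j.2 ≤ m + 1 by omega]; omega
  have hTne : T.Nonempty := by
    refine ⟨(m + 1).natAbs, ⟨(0, m + 1), ?_, ?_⟩⟩
    · simp [idxNorm]
    · rw [hmemIff]
  have hlow : ∀ n ∈ T, M ≤ n := by
    rintro n ⟨j, rfl, hj⟩
    rw [hmemIff] at hj
    calc M ≤ (m + 1).natAbs := hM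
      _ = j.2.natAbs := by rw [hj]
      _ ≤ idxNorm j := le_max_right _ _
  have hsInf : M ≤ sInf T := hlow _ (Nat.sInf_mem hTne)
  calc (2 : ℝ) ^ (-((sInf T : ℕ) : ℤ)) ≤ (2 : ℝ) ^ (-(M : ℤ)) := by
        apply zpow_le_zpow_right₀ (by norm_num : (1 : ℝ) ≤ 2)
        omega
    _ < ε := hε

/-- There are no positively expansive sand automata: for every
sand automaton `F` and every `ε > 0` there are two distinct configurations whose
orbits stay forever at distance `< ε`. -/
theorem no_positively_expansive_sa (d : ℕ) (hd : 1 ≤ d) (S : SandAutomaton d)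
    (ε : ℝ) (hε : 0 < ε) :
    ∃ x y : Conf d, x ≠ y ∧ ∀ n : ℕ, saDist (S.global^[n] x) (S.global^[n] y) < ε := by
  classical
  obtain ⟨M, hM⟩ : ∃ M : ℕ, (2 : ℝ) ^ (-(M : ℤ)) < ε := by
    obtain ⟨M, hM⟩ := exists_pow_lt_of_lt_one hε (by norm_num : (1 / 2 : ℝ) < 1)
    refine ⟨M, ?_⟩
    have : (2 : ℝ) ^ (-(M : ℤ)) = (1 / 2 : ℝ) ^ M := by
      rw [zpow_neg, zpow_natCast, one_div, inv_pow]
    rw [this]; exact hM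
  set a : ℤ := S.f (fun _ => Ztilde.ofInt 0) with ha
  set c : ℤ := if 0 ≤ a then (M : ℤ) else -(M : ℤ) - 1 with hc
  refine ⟨constConf d c, constConf d (c + 1), ?_, ?_⟩
  · intro h
    have := congrFun h 0
    rw [constConf, constConf, Ztilde.ofInt_inj] at this
    omega
  · intro n
    rw [iterate_const, iterate_const, ← ha]
    have key : M ≤ (c + n * a + 1).natAbs := by
      rcases le_or_gt 0 a with h | h
      · have h1 : 0 ≤ (n : ℤ) * a := mul_nonneg (by positivity) h
        rw [hc, if_pos h]; omega
      · have h1 : (n : ℤ) * a ≤ 0 := mul_nonpos_of_nonneg_of_nonpos (by positivity) h.le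
        rw [hc, if_neg (by omega)]; omega
    have := dist_const_lt d (c + n * a) M key ε hM
    convert this using 3 <;> ring
end
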